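/- Let η > 0, μ > 0, c > 0, and define Λ(x,t) = 2η(t/(4η²+μ²) + x), Θ(x,t) = Λ(x,t) + ln(2η/c), D = (4η²+μ²)cosh²Θ. Then the functions E = 4η sech Θ, s = (8η² cosh Θ − 4ηc e^{−Λ})/D, u = −1 + 8η²/D, r = 4ημ cosh Θ / D satisfy the reduced Maxwell–Bloch system: E_t = −s, s_x = E·u + μ·r, u_x = −E·s, r_x = −μ·s, for all (x,t) ∈ ℝ². -/

import Mathlib

open Real
set_option maxHeartbeats 1000000 in

theorem stmt_10 (η μ c : ℝ) (hη : 0 < η) (hμ : 0 < μ) (hc : 0 < c)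
    (Λ Θ D E s u r : ℝ → ℝ → ℝ)
    (hΛ : ∀ x t, Λ x t = 2 * η * (t / (4 * η ^ 2 + μ ^ 2) + x))
    (hΘ : ∀ x t, Θ x t = Λ x t + Real.log (2 * η / c))
    (hD : ∀ x t, D x t = (4 * η ^ 2 + μ ^ 2) * Real.cosh (Θ x t) ^ 2)
    (hE : ∀ x t, E x t = 4 * η / Real.cosh (Θ x t))
    (hs : ∀ x t, s x t =
      (8 * η ^ 2 * Real.cosh (Θ x t) - 4 * η * c * Real.exp (-Λ x t)) / D x t)
    (hu : ∀ x t, u x t = -1 + 8 * η ^ 2 / D x t)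
    (hr : ∀ x t, r x t = 4 * η * μ * Real.cosh (Θ x t) / D x t) :
    ∀ x t : ℝ,
      HasDerivAt (fun t' => E x t') (-s x t) t ∧
      HasDerivAt (fun x' => s x' t) (E x t * u x t + μ * r x t) x ∧
      HasDerivAt (fun x' => u x' t) (-(E x t * s x t)) x ∧
      HasDerivAt (fun x' => r x' t) (-(μ * s x t)) x := by
  intro x t
  set A : ℝ := 4 * η ^ 2 + μ ^ 2 with hAdef
  have hA : 0 < A := by positivity
  have hL : Real.exp (Real.log (2 * η / c)) = 2 * η / c :=
    Real.exp_log (by positivity)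
  -- derivative of Θ in t
  have hΘt : HasDerivAt (fun t' => Θ x t') (2 * η * (1 / A)) t := by
    have h : (fun t' => Θ x t') =
        fun t' => 2 * η * (t' / A + x) + Real.log (2 * η / c) := by
      funext t'; rw [hΘ, hΛ]
    rw [h]
    have := ((((hasDerivAt_id t).div_const A).add_const x).const_mul
      (2 * η)).add_const (Real.log (2 * η / c))
    simpa using this
  -- derivative of Λ in x
  have hΛx : HasDerivAt (fun x' => Λ x' t) (2 * η) x := by
    have h : (fun x' => Λ x' t) = fun x' => 2 * η * (t / A + x') := by
      funext x'; rw [hΛ]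
    rw [h]
    have := ((hasDerivAt_id x).const_add (t / A)).const_mul (2 * η)
    simpa using this
  -- derivative of Θ in x
  have hΘx : HasDerivAt (fun x' => Θ x' t) (2 * η) x := by
    have h : (fun x' => Θ x' t) = fun x' => Λ x' t + Real.log (2 * η / c) := by
      funext x'; rw [hΘ]
    rw [h]
    exact hΛx.add_const _
  have hchpos : ∀ y : ℝ, (0:ℝ) < Real.cosh y := fun y => Real.cosh_pos y
  set ch := Real.cosh (Θ x t) with hchdef
  set sh := Real.sinh (Θ x t) with hshdef
  have hchne : ch ≠ 0 := (hchpos _).ne'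
  set X := Real.exp (Θ x t) with hXdef
  have hXpos : 0 < X := Real.exp_pos _
  have hch : ch = (X + 1 / X) / 2 := by
    rw [hchdef, Real.cosh_eq, Real.exp_neg, hXdef]; ring
  have hsh : sh = (X - 1 / X) / 2 := by
    rw [hshdef, Real.sinh_eq, Real.exp_neg, hXdef]; ring
  have hmΛ : Real.exp (-Λ x t) = (1 / X) * (2 * η / c) := by
    have : Θ x t = Λ x t + Real.log (2 * η / c) := hΘ x t
    have h2 : -Λ x t = -Θ x t + Real.log (2 * η / c) := by rw [this]; ring
    rw [h2, Real.exp_add, Real.exp_neg, hL, hXdef]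
    ring
  have hcE : 0 < 2 * η / c := by positivity
  refine ⟨?_, ?_, ?_, ?_⟩
  · -- E_t = -s
    have hd : HasDerivAt (fun t' => 4 * η / Real.cosh (Θ x t'))
        ((0 * ch - 4 * η * (sh * (2 * η * (1 / A)))) / ch ^ 2) t :=
      (hasDerivAt_const t (4 * η)).div hΘt.cosh hchne
    have h : (fun t' => E x t') = fun t' => 4 * η / Real.cosh (Θ x t') := by
      funext t'; rw [hE]
    rw [h]
    convert hd using 1
    rw [hs, hD, ← hchdef, hch, hsh, hmΛ]
    field_simp
    ring
  · -- s_x = E u + μ r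
    have hnum : HasDerivAt
        (fun x' => 8 * η ^ 2 * Real.cosh (Θ x' t) - 4 * η * c * Real.exp (-Λ x' t))
        (8 * η ^ 2 * (sh * (2 * η)) - 4 * η * c * (Real.exp (-Λ x t) * (-(2 * η)))) x := by
      exact ((hΘx.cosh).const_mul _).sub ((hΛx.neg.exp).const_mul _)
    have hden : HasDerivAt (fun x' => A * Real.cosh (Θ x' t) ^ 2)
        (A * (2 * ch ^ 1 * (sh * (2 * η)))) x := by
      have := (hΘx.cosh.pow 2).const_mul A
      simpa using this
    have hdne : A * ch ^ 2 ≠ 0 := by positivity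
    have hd := hnum.div hden hdne
    have h : (fun x' => s x' t) = fun x' =>
        (8 * η ^ 2 * Real.cosh (Θ x' t) - 4 * η * c * Real.exp (-Λ x' t)) /
          (A * Real.cosh (Θ x' t) ^ 2) := by
      funext x'; rw [hs, hD]
    rw [h]
    refine hd.congr_deriv (Eq.symm ?_)
    rw [hE, hu, hr, hD, ← hchdef, hch, hsh, hmΛ]
    field_simp
    ring
  · -- u_x = -(E s)
    have hden : HasDerivAt (fun x' => A * Real.cosh (Θ x' t) ^ 2)
        (A * (2 * ch ^ 1 * (sh * (2 * η)))) x := by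
      have := (hΘx.cosh.pow 2).const_mul A
      simpa using this
    have hdne : A * ch ^ 2 ≠ 0 := by positivity
    have hd := ((hasDerivAt_const x (8 * η ^ 2)).div hden hdne).const_add (-1)
    have h : (fun x' => u x' t) = fun x' =>
        -1 + 8 * η ^ 2 / (A * Real.cosh (Θ x' t) ^ 2) := by
      funext x'; rw [hu, hD]
    rw [h]
    refine hd.congr_deriv (Eq.symm ?_)
    rw [hE, hs, hD, ← hchdef, hch, hsh, hmΛ]
    field_simp
    ring
  · -- r_x = -(μ s)
    have hnum : HasDerivAt (fun x' => 4 * η * μ * Real.cosh (Θ x' t))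
        (4 * η * μ * (sh * (2 * η))) x := (hΘx.cosh).const_mul _
    have hden : HasDerivAt (fun x' => A * Real.cosh (Θ x' t) ^ 2)
        (A * (2 * ch ^ 1 * (sh * (2 * η)))) x := by
      have := (hΘx.cosh.pow 2).const_mul A
      simpa using this
    have hdne : A * ch ^ 2 ≠ 0 := by positivity
    have hd := hnum.div hden hdne
    have h : (fun x' => r x' t) = fun x' =>
        4 * η * μ * Real.cosh (Θ x' t) / (A * Real.cosh (Θ x' t) ^ 2) := by
      funext x'; rw [hr, hD]
    rw [h]
    refine hd.congr_deriv (Eq.symm ?_)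
    rw [hs, hD, ← hchdef, hch, hsh, hmΛ]
    field_simp
    ring
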